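/- Let S ⊆ ℝ^n be a simplex of the form S = conv(a, B) where B is an (n−1)-dimensional base in a hyperplane {⟨u,x⟩ = c} and a is an apex with ⟨u,a⟩ < c. If the barycenter of S lies on the hyperplane {⟨u,x⟩ = c₀} with H = {⟨u,x⟩ ≤ c₀}, then vol(S ∩ H) = (n/(n+1))^n vol(S), where c₀ = (⟨u,a⟩ + n·c)/(n+1). -/

import Mathlib

open MeasureTheory

/-- Grünbaum's bound is attained by simplices: for a simplex `S = conv(a, v₁, …, vₙ)`
with base vertices in the hyperplane `{⟨u,x⟩ = c}` and apex `a` with `⟨u,a⟩ < c`, cutting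
with the half-space `{⟨u,x⟩ ≤ c₀}` through the barycenter, where
`c₀ = (⟨u,a⟩ + n·c)/(n+1)`, gives exactly the fraction `(n/(n+1))ⁿ` of the volume. -/
theorem simplex_attains_gruenbaum (n : ℕ) (hn : 1 ≤ n)
    (u : Fin n → ℝ) (hu : u ≠ 0) (c : ℝ)
    (a : Fin n → ℝ) (ha : ∑ i, u i * a i < c)
    (v : Fin n → (Fin n → ℝ)) (hv : ∀ i, ∑ j, u j * v i j = c)
    (hai : AffineIndependent ℝ (Fin.cons a v : Fin (n + 1) → (Fin n → ℝ)))
    (S : Set (Fin n → ℝ)) (hS : S = convexHull ℝ (insert a (Set.range v)))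
    (c₀ : ℝ) (hc₀ : c₀ = ((∑ i, u i * a i) + n * c) / (n + 1))
    (H : Set (Fin n → ℝ)) (hH : H = {x | ∑ i, u i * x i ≤ c₀}) :
    (volume (S ∩ H)).toReal = ((n : ℝ) / (n + 1)) ^ n * (volume S).toReal := by
  classical
  set α : ℝ := ∑ i, u i * a i with hα
  set g : (Fin n → ℝ) → ℝ := fun x => ∑ i, u i * x i with hg
  set t : ℝ := (n : ℝ) / (n + 1) with ht
  have hn1 : (0 : ℝ) < (n : ℝ) + 1 := by positivity
  have ht0 : 0 < t := by
    apply div_pos _ hn1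
    exact_mod_cast Nat.lt_of_lt_of_le Nat.zero_lt_one hn
  have htne : t ≠ 0 := ne_of_gt ht0
  have ht1 : t < 1 := by
    rw [ht, div_lt_one hn1]; linarith
  set p : Fin (n + 1) → (Fin n → ℝ) := Fin.cons a v with hp
  -- g of a linear combination
  have gsum : ∀ (m : ℕ) (W : Fin m → ℝ) (q : Fin m → Fin n → ℝ),
      g (∑ i, W i • q i) = ∑ i, W i * g (q i) := by
    intro m W q
    simp only [hg, Finset.sum_apply, Pi.smul_apply, smul_eq_mul, Finset.mul_sum]
    rw [Finset.sum_comm]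
    refine Finset.sum_congr rfl fun i _ => Finset.sum_congr rfl fun j _ => by ring
  have gp0 : g (p 0) = α := by simp [hp, hg, hα]
  have gps : ∀ i : Fin n, g (p i.succ) = c := by intro i; simp [hp, hg, hv i]
  -- combination minus a
  have combsub : ∀ W : Fin (n + 1) → ℝ, ∑ i, W i = 1 →
      (∑ i, W i • p i) - a = ∑ i : Fin n, W i.succ • (v i - a) := by
    intro W hW
    have : (∑ i, W i • p i) - a = ∑ i, W i • (p i - a) := by
      simp only [smul_sub, Finset.sum_sub_distrib, ← Finset.sum_smul, hW, one_smul]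
    rw [this, Fin.sum_univ_succ]
    simp [hp]
  have haS : a ∈ S := by
    rw [hS]; exact subset_convexHull ℝ _ (Set.mem_insert _ _)
  have hSc : S = convexHull ℝ (Set.range p) := by rw [hS, hp, Fin.range_cons]
  -- each point of S has g ≤ c
  have hgS : ∀ x ∈ S, g x ≤ c := by
    intro x hx
    rw [hS] at hx
    have : convexHull ℝ (insert a (Set.range v)) ⊆ {y | g y ≤ c} := by
      apply convexHull_min
      · rintro y (rfl | ⟨i, rfl⟩)
        · exact le_of_lt ha
        · exact le_of_eq (hv i)
      · exact convex_halfSpace_le ⟨fun z w => by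
          simp [hg, mul_add, Finset.sum_add_distrib], fun r z => by
          simp [hg, Finset.mul_sum, mul_left_comm]⟩ c
    exact this hx
  have key : S ∩ H = AffineMap.homothety a t '' S := by
    apply Set.Subset.antisymm
    · rintro x ⟨hxS, hxH⟩
      have hx' : x ∈ convexHull ℝ (Set.range p) := by rwa [← hSc]
      rw [convexHull_range_eq_exists_affineCombination] at hx'
      obtain ⟨s, w, hw0, hw1, hwx⟩ := hx'
      set W : Fin (n + 1) → ℝ := fun i => if i ∈ s then w i else 0 with hWDef
      have hW0 : ∀ i, 0 ≤ W i := by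
        intro i; by_cases h : i ∈ s <;> simp [hWDef, h]
        exact hw0 i h
      have hW1 : ∑ i, W i = 1 := by
        rw [← hw1]
        simp [hWDef, Finset.sum_ite_mem]
      have hWind : (Set.indicator (↑s) w) = W := by
        funext i; simp [Set.indicator_apply, hWDef, Finset.mem_coe]
      have hWx : ∑ i, W i • p i = x := by
        rw [← hwx, Finset.affineCombination_indicator_subset w p (Finset.subset_univ s),
          hWind, Finset.affineCombination_eq_linear_combination _ _ _ hW1]
      set sβ : ℝ := ∑ i : Fin n, W i.succ with hsβ
      have hsβ0 : 0 ≤ sβ := Finset.sum_nonneg fun i _ => hW0 _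
      have hsum : W 0 + sβ = 1 := by rw [← hW1, Fin.sum_univ_succ]
      have hgx : g x = W 0 * α + sβ * c := by
        rw [← hWx, gsum, Fin.sum_univ_succ, gp0, hsβ, Finset.sum_mul]
        refine congrArg _ (Finset.sum_congr rfl fun i _ => by rw [gps])
      have hxle : g x ≤ c₀ := by rw [hH] at hxH; exact hxH
      have hsβt : sβ ≤ t := by
        rw [hgx, hc₀] at hxle
        have hW0eq : W 0 = 1 - sβ := by linarith
        have hd : 0 < c - α := by linarith
        have h2 : ((1 - sβ) * α + sβ * c) * ((n : ℝ) + 1) ≤ α + (n : ℝ) * c := by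
          rw [← le_div_iff₀ hn1]; rwa [hW0eq] at hxle
        rw [ht, le_div_iff₀ hn1]
        nlinarith [h2, hd]
      -- construct preimage point
      set W' : Fin (n + 1) → ℝ := Fin.cons (1 - sβ / t) (fun i => W i.succ / t) with hW'
      have hW'1 : ∑ i, W' i = 1 := by
        rw [Fin.sum_univ_succ]
        simp only [hW', Fin.cons_zero, Fin.cons_succ]
        rw [← Finset.sum_div, ← hsβ]
        field_simp
        ring
      set y : Fin n → ℝ := ∑ i, W' i • p i with hy
      have hyS : y ∈ S := by
        rw [hSc, convexHull_range_eq_exists_affineCombination]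
        refine ⟨Finset.univ, W', fun i _ => ?_, hW'1, ?_⟩
        · refine Fin.cases ?_ ?_ i
          · simp only [hW', Fin.cons_zero, sub_nonneg]
            exact div_le_one_of_le₀ hsβt (le_of_lt ht0)
          · intro j
            simp only [hW', Fin.cons_succ]
            exact div_nonneg (hW0 _) (le_of_lt ht0)
        · rw [Finset.affineCombination_eq_linear_combination _ _ _ hW'1]
      refine ⟨y, hyS, ?_⟩
      rw [AffineMap.homothety_apply]
      have hy' : y - a = ∑ i : Fin n, (W i.succ / t) • (v i - a) := by
        rw [hy, combsub W' hW'1]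
        simp [hW']
      have hx' : x - a = ∑ i : Fin n, W i.succ • (v i - a) := by
        rw [← hWx, combsub W hW1]
      have : t • (y - a) = x - a := by
        rw [hy', hx', Finset.smul_sum]
        refine Finset.sum_congr rfl fun i _ => ?_
        rw [smul_smul, mul_div_cancel₀ _ htne]
      simp only [vsub_eq_sub, vadd_eq_add, this]
      abel
    · rintro _ ⟨x, hxS, rfl⟩
      have heq : AffineMap.homothety a t x = (1 - t) • a + t • x := by
        rw [AffineMap.homothety_apply]
        simp only [vsub_eq_sub, vadd_eq_add, smul_sub, sub_smul, one_smul]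
        abel
      constructor
      · rw [heq]
        exact (hS ▸ convex_convexHull ℝ _) haS hxS (by linarith) (le_of_lt ht0) (by ring)
      · rw [hH, heq]
        have : g ((1 - t) • a + t • x) = (1 - t) * α + t * g x := by
          simp only [hg, hα, Pi.add_apply, Pi.smul_apply, smul_eq_mul, mul_add,
            Finset.sum_add_distrib, Finset.mul_sum]
          congr 1 <;> exact Finset.sum_congr rfl fun i _ => by ring
        show g _ ≤ c₀
        rw [this, hc₀]
        have hgxc : g x ≤ c := hgS x hxS
        have : (1 - t) * α + t * g x ≤ (1 - t) * α + t * c := by nlinarith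
        refine le_trans this (le_of_eq ?_)
        rw [ht]; field_simp; ring
  rw [key, Measure.addHaar_image_homothety, ENNReal.toReal_mul,
    ENNReal.toReal_ofReal (abs_nonneg _), Module.finrank_fin_fun,
    abs_of_nonneg (pow_nonneg (le_of_lt ht0) n)]
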